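/- Let Q be the total quotient ring (localization at nonzerodivisors) of S = F[[x,y]]/(x²y). Then the element u = x(x+y)^{-1} of Q satisfies u² = u³, so e = u² is an idempotent in Q. -/

import Mathlib

noncomputable section

/-- The D-infinity plane singularity `S = F[[x,y]]/(x²y)`. -/
abbrev Dinf (F : Type*) [Field F] : Type _ :=
  MvPowerSeries (Fin 2) F ⧸
    (Ideal.span {(MvPowerSeries.X (0 : Fin 2)) ^ 2 * MvPowerSeries.X 1} :
      Ideal (MvPowerSeries (Fin 2) F))

variable (F : Type*) [Field F]

/-- The image of the variable `x` in `S`. -/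
abbrev xS : Dinf F := Ideal.Quotient.mk _ (MvPowerSeries.X 0)

/-- The image of the variable `y` in `S`. -/
abbrev yS : Dinf F := Ideal.Quotient.mk _ (MvPowerSeries.X 1)

/-- The total quotient ring `Q` of `S`, the localization at the nonzerodivisors. -/
abbrev QS : Type _ := Localization (nonZeroDivisors (Dinf F))

/-- The canonical map `S → Q`. -/
abbrev toQ : Dinf F →+* QS F := algebraMap (Dinf F) (QS F)

open MvPowerSeries Finsupp

/-- exponent vector -/
abbrev ee (a b : ℕ) : Fin 2 →₀ ℕ := Finsupp.single 0 a + Finsupp.single 1 b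

@[simp] lemma ee_apply0 (a b : ℕ) : ee a b 0 = a := by
  simp [ee, Finsupp.single_apply]

@[simp] lemma ee_apply1 (a b : ℕ) : ee a b 1 = b := by
  simp [ee, Finsupp.single_apply]

lemma ee_surj (m : Fin 2 →₀ ℕ) : m = ee (m 0) (m 1) := by
  ext s
  fin_cases s <;> simp [ee, Finsupp.single_apply]

section helpers

variable {F : Type*} [Field F]

lemma monomial_one_dvd_iff (d : Fin 2 →₀ ℕ) (φ : MvPowerSeries (Fin 2) F) :
    (monomial d 1) ∣ φ ↔ ∀ m, ¬ d ≤ m → coeff m φ = 0 := by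
  constructor
  · rintro ⟨ψ, rfl⟩ m hm
    rw [coeff_monomial_mul, if_neg hm]
  · intro h
    refine ⟨show MvPowerSeries (Fin 2) F from fun m => coeff (m + d) φ, ?_⟩
    ext m
    rw [coeff_monomial_mul]
    by_cases hd : d ≤ m
    · rw [if_pos hd, one_mul]
      show _ = coeff (m - d + d) φ
      rw [tsub_add_cancel_of_le hd]
    · rw [if_neg hd, h m hd]

lemma gen_eq : (MvPowerSeries.X (0 : Fin 2) : MvPowerSeries (Fin 2) F) ^ 2 * MvPowerSeries.X 1
    = monomial (ee 2 1) 1 := by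
  rw [X_pow_eq, X_def, monomial_mul_monomial, one_mul]

lemma ee_sub0 (a b : ℕ) : ee (a+1) b - Finsupp.single 0 1 = ee a b := by
  ext s; fin_cases s <;> simp [ee, Finsupp.tsub_apply, Finsupp.single_apply]

lemma ee_sub1 (a b : ℕ) : ee a (b+1) - Finsupp.single 1 1 = ee a b := by
  ext s; fin_cases s <;> simp [ee, Finsupp.tsub_apply, Finsupp.single_apply]

lemma coeff_mul_X0 (f : MvPowerSeries (Fin 2) F) (a b : ℕ) :
    coeff (ee (a+1) b) (f * MvPowerSeries.X 0) = coeff (ee a b) f := by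
  rw [X_def, coeff_mul_monomial, if_pos (by simp [Finsupp.single_le_iff]), ee_sub0, mul_one]

lemma coeff_mul_X0' (f : MvPowerSeries (Fin 2) F) (b : ℕ) :
    coeff (ee 0 b) (f * MvPowerSeries.X 0) = 0 := by
  rw [X_def, coeff_mul_monomial, if_neg (by simp [Finsupp.single_le_iff])]

lemma coeff_mul_X1 (f : MvPowerSeries (Fin 2) F) (a b : ℕ) :
    coeff (ee a (b+1)) (f * MvPowerSeries.X 1) = coeff (ee a b) f := by
  rw [X_def, coeff_mul_monomial, if_pos (by simp [Finsupp.single_le_iff]), ee_sub1, mul_one]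

lemma coeff_mul_X1' (f : MvPowerSeries (Fin 2) F) (a : ℕ) :
    coeff (ee a 0) (f * MvPowerSeries.X 1) = 0 := by
  rw [X_def, coeff_mul_monomial, if_neg (by simp [Finsupp.single_le_iff])]

lemma key_coeffs (f : MvPowerSeries (Fin 2) F)
    (H : ∀ m, ¬ ee 2 1 ≤ m → coeff m (f * (MvPowerSeries.X 0 + MvPowerSeries.X 1)) = 0) :
    ∀ m, ¬ ee 2 1 ≤ m → coeff m f = 0 := by
  have hnot : ∀ a b : ℕ, a < 2 ∨ b < 1 → ¬ ee 2 1 ≤ ee a b := by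
    intro a b h hle
    rw [Finsupp.le_def] at hle
    have h0 := hle 0; have h1 := hle 1
    simp at h0 h1
    omega
  have Hab : ∀ a b : ℕ, a < 2 ∨ b < 1 →
      coeff (ee a b) (f * MvPowerSeries.X 0) + coeff (ee a b) (f * MvPowerSeries.X 1) = 0 := by
    intro a b h
    have := H (ee a b) (hnot a b h)
    rwa [mul_add, map_add] at this
  -- step 1 : b = 0
  have h0 : ∀ a, coeff (ee a 0) f = 0 := by
    intro a
    have := Hab (a+1) 0 (Or.inr Nat.zero_lt_one)
    rwa [coeff_mul_X0, coeff_mul_X1', add_zero] at this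
  -- step 2 : a = 0
  have h1 : ∀ b, coeff (ee 0 b) f = 0 := by
    intro b
    have := Hab 0 (b+1) (Or.inl (by omega))
    rwa [coeff_mul_X0', coeff_mul_X1, zero_add] at this
  -- step 3 : a = 1
  have h2 : ∀ b, coeff (ee 1 b) f = 0 := by
    intro b
    have := Hab 1 (b+1) (Or.inl (by omega))
    rw [show (ee 1 (b+1)) = ee (0+1) (b+1) from rfl] at this
    rwa [coeff_mul_X0, coeff_mul_X1, h1, zero_add] at this
  intro m hm
  have hd : m 0 < 2 ∨ m 1 < 1 := by
    by_contra h
    push_neg at h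
    exact hm (by
      rw [Finsupp.le_def]
      intro s; fin_cases s <;> simp [ee, Finsupp.single_apply] <;> omega)
  rw [ee_surj m]
  rcases hd with h | h
  · interval_cases h' : m 0
    · exact h1 _
    · exact h2 _
  · interval_cases h' : m 1
    · exact h0 _

end helpers

lemma xy_mem : (xS F + yS F) ∈ nonZeroDivisors (Dinf F) := by
  rw [mem_nonZeroDivisors_iff_right]
  intro c hc
  obtain ⟨f, rfl⟩ := Ideal.Quotient.mk_surjective c
  rw [show xS F + yS F = Ideal.Quotient.mk _ (MvPowerSeries.X 0 + MvPowerSeries.X 1) from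
      (map_add _ _ _).symm, ← map_mul, Ideal.Quotient.eq_zero_iff_mem,
      Ideal.mem_span_singleton, gen_eq, monomial_one_dvd_iff] at hc
  rw [Ideal.Quotient.eq_zero_iff_mem, Ideal.mem_span_singleton, gen_eq, monomial_one_dvd_iff]
  exact key_coeffs f hc

set_option maxHeartbeats 1000000 in
lemma abstract_alg {Q : Type*} [CommRing Q] (u t a : Q) (hu : u * t = a)
    (h : a ^ 2 * t - a ^ 3 = 0) (ht : IsUnit t) : u ^ 2 = u ^ 3 := by
  obtain ⟨v, hv⟩ := ht.pow 3
  have h3 : (u ^ 2 - u ^ 3) * t ^ 3 = 0 := by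
    have e1 : (u ^ 2 - u ^ 3) * t ^ 3 = (u * t) ^ 2 * t - (u * t) ^ 3 := by ring
    rw [e1, hu, h]
  rw [← hv] at h3
  have h0 : u ^ 2 - u ^ 3 = 0 := by rwa [Units.mul_left_eq_zero] at h3
  exact sub_eq_zero.mp h0

set_option maxHeartbeats 1000000 in
set_option synthInstance.maxHeartbeats 1000000 in
theorem stmt7 (u : QS F) (hu : u * toQ F (xS F + yS F) = toQ F (xS F)) :
    u ^ 2 = u ^ 3 ∧ IsIdempotentElem (u ^ 2) := by
  have hunit : IsUnit (toQ F (xS F + yS F)) :=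
    IsLocalization.map_units (QS F) (⟨_, xy_mem F⟩ : nonZeroDivisors (Dinf F))
  have hx2y : (xS F) ^ 2 * (xS F + yS F) - (xS F) ^ 3 = 0 := by
    have e : (xS F) ^ 2 * (xS F + yS F) - (xS F) ^ 3 = (xS F) ^ 2 * yS F := by ring
    rw [e, ← map_pow, ← map_mul, Ideal.Quotient.eq_zero_iff_mem]
    exact Ideal.subset_span rfl
  have h : (toQ F (xS F)) ^ 2 * toQ F (xS F + yS F) - (toQ F (xS F)) ^ 3 = 0 := by
    have h' := congrArg (toQ F) hx2y
    rwa [map_zero, map_sub, map_mul, map_pow, map_pow] at h' 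
  have key : u ^ 2 = u ^ 3 := abstract_alg u _ _ hu h hunit
  refine ⟨key, ?_⟩
  show u ^ 2 * u ^ 2 = u ^ 2
  rw [← pow_add]
  rw [show (2 + 2 : ℕ) = 3 + 1 from rfl, pow_succ, ← key, ← pow_succ,
    show (2 + 1 : ℕ) = 3 from rfl, ← key]
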